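/- arXiv:2411.18752 — 5 statements merged into one kernel-verified Lean document; each statement's English description precedes it below -/
import Mathlib

section
/- If f is L-smooth and satisfies the quasi strong convexity condition f⋆ ≥ f(x) + ⟨∇f(x), P(x) − x⟩ + (μ/2)‖P(x) − x‖² for all x (where P(x) is the projection onto the solution set X⋆ and f⋆ the minimal value), then f satisfies the error bound condition μ·dist(x, X⋆) ≤ ‖∇f(x)‖ for all x. -/
open scoped RealInnerProductSpace
open Filter

theorem my_descent_lemma (d : ℕ) (f : EuclideanSpace ℝ (Fin d) → ℝ)
    (g : EuclideanSpace ℝ (Fin d) → EuclideanSpace ℝ (Fin d)) (L : ℝ)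
    (hgrad : ∀ x, HasGradientAt f (g x) x)
    (hlip : ∀ x y, ‖g x - g y‖ ≤ L * ‖x - y‖) (x y : EuclideanSpace ℝ (Fin d)) :
    f y ≤ f x + ⟪g x, y - x⟫ + L / 2 * ‖y - x‖ ^ 2 := by
  set c : ℝ → EuclideanSpace ℝ (Fin d) := fun t => x + t • (y - x) with hc
  have hcder : ∀ t : ℝ, HasDerivAt c (y - x) t := by
    intro t
    have : HasDerivAt (fun t : ℝ => t • (y - x)) ((1:ℝ) • (y - x)) t :=
      (hasDerivAt_id t).smul_const (y - x)
    simpa only [one_smul] using this.const_add x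
  have hφ : ∀ t : ℝ, HasDerivAt (fun t => f (c t)) ⟪g (c t), y - x⟫ t := by
    intro t
    have h1 := (hgrad (c t)).hasFDerivAt.comp_hasDerivAt t (hcder t)
    exact h1
  set F : ℝ → ℝ := fun t => f x + t * ⟪g x, y - x⟫ + L / 2 * (t ^ 2 * ‖y - x‖ ^ 2) - f (c t)
    with hF
  have hFder : ∀ t : ℝ, HasDerivAt F
      (⟪g x, y - x⟫ + L / 2 * (2 * t * ‖y - x‖ ^ 2) - ⟪g (c t), y - x⟫) t := by
    intro t
    have h1 : HasDerivAt (fun t : ℝ => f x + t * ⟪g x, y - x⟫ + L / 2 * (t ^ 2 * ‖y - x‖ ^ 2))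
        (⟪g x, y - x⟫ + L / 2 * (2 * t * ‖y - x‖ ^ 2)) t := by
      have h2 : HasDerivAt (fun t : ℝ => t ^ 2) (2 * t) t := by
        simpa using hasDerivAt_pow 2 t
      have h3 := ((h2.mul_const (‖y - x‖ ^ 2)).const_mul (L / 2)).const_add
        (f x + 0 * ⟪g x, y - x⟫)
      have h4 : HasDerivAt (fun t : ℝ => t * ⟪g x, y - x⟫) ⟪g x, y - x⟫ t := by
        simpa using (hasDerivAt_id t).mul_const ⟪g x, y - x⟫
      have h5 := ((h4.const_add (f x)).add ((h2.mul_const (‖y - x‖ ^ 2)).const_mul (L / 2)))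
      exact h5
    exact h1.sub (hφ t)
  have key : F 0 ≤ F 1 := by
    have mono := monotoneOn_of_deriv_nonneg (convex_Icc (0:ℝ) 1)
      (fun t _ => ((hFder t).continuousAt.continuousWithinAt))
      (fun t _ => (hFder t).differentiableAt.differentiableWithinAt)
      (fun t ht => by
        rw [(hFder t).deriv]
        rw [interior_Icc] at ht
        have hb : ⟪g (c t) - g x, y - x⟫ ≤ L * t * ‖y - x‖ ^ 2 := by
          calc ⟪g (c t) - g x, y - x⟫ ≤ ‖g (c t) - g x‖ * ‖y - x‖ := real_inner_le_norm _ _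
            _ ≤ (L * ‖c t - x‖) * ‖y - x‖ := by
                have := hlip (c t) x
                nlinarith [norm_nonneg (y - x), this, norm_nonneg (g (c t) - g x)]
            _ = L * t * ‖y - x‖ ^ 2 := by
                have : c t - x = t • (y - x) := by simp [hc]
                rw [this, norm_smul]
                simp [abs_of_pos ht.1]
                ring
        have := inner_sub_left (𝕜 := ℝ) (g (c t)) (g x) (y - x)
        nlinarith [hb])
    exact mono (by simp : (0:ℝ) ∈ Set.Icc (0:ℝ) 1) (by simp : (1:ℝ) ∈ Set.Icc (0:ℝ) 1)
      zero_le_one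
  have hc0 : c 0 = x := by simp [hc]
  have hc1 : c 1 = y := by simp [hc]
  rw [hF] at key
  simp only [hc0, hc1] at key
  nlinarith [key]

theorem my_quadratic_growth (d : ℕ) (f : EuclideanSpace ℝ (Fin d) → ℝ)
    (g : EuclideanSpace ℝ (Fin d) → EuclideanSpace ℝ (Fin d)) (L μ : ℝ)
    (Xstar : Set (EuclideanSpace ℝ (Fin d))) (fstar : ℝ)
    (P : EuclideanSpace ℝ (Fin d) → EuclideanSpace ℝ (Fin d))
    (descent : ∀ x y, f y ≤ f x + ⟪g x, y - x⟫ + L / 2 * ‖y - x‖ ^ 2)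
    (hXmin : ∀ x, x ∈ Xstar ↔ (f x = fstar ∧ ∀ y, f x ≤ f y))
    (hPmem : ∀ x, P x ∈ Xstar)
    (hPnear : ∀ x, ∀ y ∈ Xstar, ‖x - P x‖ ≤ ‖x - y‖)
    (hQSC : ∀ x, fstar ≥ f x + ⟪g x, P x - x⟫ + μ / 2 * ‖P x - x‖ ^ 2)
    (x : EuclideanSpace ℝ (Fin d)) :
    μ / 2 * ‖x - P x‖ ^ 2 ≤ f x - fstar := by
  have hfstar_le : ∀ z, fstar ≤ f z := by
    intro z
    obtain ⟨h1, h2⟩ := (hXmin (P z)).mp (hPmem z)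
    exact h1 ▸ h2 z
  set D := ‖x - P x‖ with hD
  -- key inequality for each step size h ∈ (0,1)
  have key : ∀ h : ℝ, 0 < h → h < 1 → (μ - L * h) / (2 * (1 - h)) * D ^ 2 ≤ f x - fstar := by
    intro h h0 h1
    have h1h : (0:ℝ) < 1 - h := by linarith
    set α : ℝ := h * (μ - L * h) / 2 with hα
    -- the sequence
    set X : ℕ → EuclideanSpace ℝ (Fin d) :=
      fun k => Nat.rec x (fun _ xk => xk + h • (P xk - xk)) k with hX
    have hXsucc : ∀ k, X (k + 1) = X k + h • (P (X k) - X k) := fun k => rfl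
    -- distance recursion
    have hdist : ∀ k, ‖X k - P (X k)‖ = (1 - h) ^ k * D := by
      intro k
      induction k with
      | zero => simp [hX, hD]
      | succ n ih =>
        have step : ‖X (n+1) - P (X (n+1))‖ = (1 - h) * ‖X n - P (X n)‖ := by
          set z := X n
          have hz1 : X (n+1) - P z = (1 - h) • (z - P z) := by
            rw [hXsucc]
            module
          have hle : ‖X (n+1) - P (X (n+1))‖ ≤ (1 - h) * ‖z - P z‖ := by
            have := hPnear (X (n+1)) (P z) (hPmem z)
            rw [hz1, norm_smul] at this
            simpa [abs_of_pos h1h] using this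
          have hge : (1 - h) * ‖z - P z‖ ≤ ‖X (n+1) - P (X (n+1))‖ := by
            have t1 : ‖z - P z‖ ≤ ‖z - P (X (n+1))‖ := hPnear z (P (X (n+1))) (hPmem (X (n+1)))
            have t2 : ‖z - P (X (n+1))‖ ≤ ‖z - X (n+1)‖ + ‖X (n+1) - P (X (n+1))‖ :=
              norm_sub_le_norm_sub_add_norm_sub z (X (n+1)) (P (X (n+1)))
            have t3 : ‖z - X (n+1)‖ = h * ‖z - P z‖ := by
              have : z - X (n+1) = h • (z - P z) := by
                rw [hXsucc]
                module
              rw [this, norm_smul]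
              simp [abs_of_pos h0]
            nlinarith [t1, t2, t3]
          linarith [le_antisymm hle hge]
        rw [step, ih]; ring
    -- function value recursion
    have hrec : ∀ k, f (X (k+1)) - fstar ≤
        (1 - h) * (f (X k) - fstar) - α * ((1 - h) ^ (2 * k) * D ^ 2) := by
      intro k
      have hdes := descent (X k) (X (k+1))
      have hdiff : X (k+1) - X k = h • (P (X k) - X k) := by rw [hXsucc]; abel
      rw [hdiff] at hdes
      have hinner : ⟪g (X k), h • (P (X k) - X k)⟫ = h * ⟪g (X k), P (X k) - X k⟫ :=
        real_inner_smul_right _ _ _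
      have hnorm : ‖h • (P (X k) - X k)‖ ^ 2 = h ^ 2 * ((1 - h) ^ (2*k) * D ^ 2) := by
        rw [norm_smul]
        have : ‖P (X k) - X k‖ = ‖X k - P (X k)‖ := norm_sub_rev _ _
        rw [this, hdist k, Real.norm_eq_abs, abs_of_pos h0, two_mul, pow_add]
        ring
      have hq := hQSC (X k)
      have hDk : ‖P (X k) - X k‖ ^ 2 = (1 - h) ^ (2*k) * D ^ 2 := by
        rw [norm_sub_rev, hdist k, two_mul, pow_add]
        ring
      rw [hDk] at hq
      rw [hinner, hnorm] at hdes
      nlinarith [hq, hdes]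
    -- telescoped bound by induction
    have htel : ∀ N : ℕ, f (X N) - fstar ≤
        (1 - h) ^ N * (f x - fstar)
          - α * D ^ 2 / (1 - h) * ((1 - h) ^ N * ∑ k ∈ Finset.range N, (1 - h) ^ k) := by
      intro N
      induction N with
      | zero => simp [hX]
      | succ n ih =>
        have h2 := hrec n
        have h3 : (1 - h) * (f (X n) - fstar) ≤ (1 - h) * ((1 - h) ^ n * (f x - fstar)
            - α * D ^ 2 / (1 - h) * ((1 - h) ^ n * ∑ k ∈ Finset.range n, (1 - h) ^ k)) :=
          mul_le_mul_of_nonneg_left ih (le_of_lt h1h)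
        have e2 : (1 - h) ^ (n+1) * (f x - fstar)
              - α * D ^ 2 / (1 - h) * ((1 - h) ^ (n+1) * ∑ k ∈ Finset.range (n+1), (1 - h) ^ k)
            = (1 - h) * ((1 - h) ^ n * (f x - fstar)
              - α * D ^ 2 / (1 - h) * ((1 - h) ^ n * ∑ k ∈ Finset.range n, (1 - h) ^ k))
              - α * ((1 - h) ^ (2 * n) * D ^ 2) := by
          rw [Finset.sum_range_succ, pow_succ, two_mul, pow_add]
          field_simp
          ring
        linarith [h2, h3, e2]
    -- let N → ∞
    have hψ : ∀ N, 0 ≤ f (X N) - fstar := fun N => by linarith [hfstar_le (X N)]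
    have hbound : ∀ N : ℕ, α * D ^ 2 / (1 - h) * ((1 - (1 - h) ^ N) / h) ≤ f x - fstar := by
      intro N
      have := htel N
      have hgs : ∑ k ∈ Finset.range N, (1 - h) ^ k = (1 - (1 - h) ^ N) / h := by
        rw [geom_sum_eq (ne_of_lt (by linarith : (1:ℝ) - h < 1))]
        rw [div_eq_div_iff (sub_ne_zero.mpr (ne_of_lt (by linarith : (1:ℝ) - h < 1)))
          (ne_of_gt h0)]
        ring
      rw [hgs] at this
      have hψN := hψ N
      have hpN : (0:ℝ) < (1 - h) ^ N := pow_pos h1h N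
      have : α * D ^ 2 / (1 - h) * ((1 - h) ^ N * ((1 - (1 - h) ^ N) / h))
          ≤ (1 - h) ^ N * (f x - fstar) := by linarith
      have e : α * D ^ 2 / (1 - h) * ((1 - h) ^ N * ((1 - (1 - h) ^ N) / h))
          = (1-h)^N * (α * D ^ 2 / (1 - h) * ((1 - (1 - h) ^ N) / h)) := by ring
      rw [e] at this
      exact le_of_mul_le_mul_left this hpN
    have hlim : Tendsto (fun N : ℕ => α * D ^ 2 / (1 - h) * ((1 - (1 - h) ^ N) / h)) atTop
        (nhds (α * D ^ 2 / (1 - h) * ((1 - 0) / h))) := by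
      apply Tendsto.const_mul
      apply Tendsto.div_const
      apply Tendsto.const_sub
      apply tendsto_pow_atTop_nhds_zero_of_abs_lt_one
      rw [abs_of_pos h1h]; linarith
    have := le_of_tendsto hlim (Filter.Eventually.of_forall hbound)
    calc (μ - L * h) / (2 * (1 - h)) * D ^ 2
        = α * D ^ 2 / (1 - h) * ((1 - 0) / h) := by
          rw [hα]; field_simp; ring
      _ ≤ f x - fstar := this
  -- let h → 0
  have hlim2 : Tendsto (fun h : ℝ => (μ - L * h) / (2 * (1 - h)) * D ^ 2)
      (nhdsWithin 0 (Set.Ioi 0)) (nhds ((μ - L * 0) / (2 * (1 - 0)) * D ^ 2)) := by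
    apply Filter.Tendsto.mono_left _ nhdsWithin_le_nhds
    apply ContinuousAt.tendsto
    apply ContinuousAt.mul _ continuousAt_const
    apply ContinuousAt.div (by fun_prop) (by fun_prop)
    norm_num
  have hev : ∀ᶠ h : ℝ in nhdsWithin 0 (Set.Ioi 0),
      (μ - L * h) / (2 * (1 - h)) * D ^ 2 ≤ f x - fstar := by
    filter_upwards [Ioo_mem_nhdsGT_of_mem (Set.mem_Ico.mpr ⟨le_refl (0:ℝ), one_pos⟩)]
      with h hh
    exact key h hh.1 hh.2
  have := le_of_tendsto hlim2 hev
  calc μ / 2 * D ^ 2 = (μ - L * 0) / (2 * (1 - 0)) * D ^ 2 := by norm_num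
    _ ≤ f x - fstar := this


theorem qsc_implies_error_bound (d : ℕ) (f : EuclideanSpace ℝ (Fin d) → ℝ)
    (g : EuclideanSpace ℝ (Fin d) → EuclideanSpace ℝ (Fin d)) (L μ : ℝ)
    (Xstar : Set (EuclideanSpace ℝ (Fin d))) (hXne : Xstar.Nonempty)
    (fstar : ℝ)
    (P : EuclideanSpace ℝ (Fin d) → EuclideanSpace ℝ (Fin d))
    (hgrad : ∀ x, HasGradientAt f (g x) x)
    (hlip : ∀ x y, ‖g x - g y‖ ≤ L * ‖x - y‖)
    (hXmin : ∀ x, x ∈ Xstar ↔ (f x = fstar ∧ ∀ y, f x ≤ f y))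
    (hPmem : ∀ x, P x ∈ Xstar)
    (hPnear : ∀ x, ∀ y ∈ Xstar, ‖x - P x‖ ≤ ‖x - y‖)
    (hQSC : ∀ x, fstar ≥ f x + ⟪g x, P x - x⟫ + μ / 2 * ‖P x - x‖ ^ 2) :
    ∀ x, μ * ‖x - P x‖ ≤ ‖g x‖ := by
  intro x
  have hQG := my_quadratic_growth d f g L μ Xstar fstar P
    (my_descent_lemma d f g L hgrad hlip) hXmin hPmem hPnear hQSC x
  have hq := hQSC x
  have hflip : ⟪g x, P x - x⟫ = -⟪g x, x - P x⟫ := by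
    rw [← inner_neg_right, neg_sub]
  have hnrev : ‖P x - x‖ = ‖x - P x‖ := norm_sub_rev _ _
  rw [hflip, hnrev] at hq
  have hcs : ⟪g x, x - P x⟫ ≤ ‖g x‖ * ‖x - P x‖ := real_inner_le_norm _ _
  rcases eq_or_lt_of_le (norm_nonneg (x - P x)) with hD | hD
  · rw [← hD]
    simpa using norm_nonneg (g x)
  · have : μ * ‖x - P x‖ * ‖x - P x‖ ≤ ‖g x‖ * ‖x - P x‖ := by nlinarith [hQG, hq, hcs]
    exact le_of_mul_le_mul_right this hD
end

section
/- If f satisfies the Polyak–Łojasiewicz inequality c·(f(x) − f⋆) ≤ (1/2)‖∇f(x)‖² for all x, then f satisfies the quadratic growth condition (c/4)·dist²(x, X⋆) ≤ f(x) − f⋆ for all x (i.e., QG holds with constant c_QG = c/2). -/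
open Filter Topology

theorem ekeland_aux {X : Type*} [MetricSpace X] [CompleteSpace X]
    (h : X → ℝ) (hcont : Continuous h) (hnn : ∀ z, 0 ≤ h z) (δ : ℝ) (hδ : 0 < δ) (x : X) :
    ∃ y : X, δ * dist x y ≤ h x - h y ∧ ∀ z, h y ≤ h z + δ * dist z y := by
  have key : ∀ (n : ℕ) (w : X), ∃ w', (h w' + δ * dist w' w ≤ h w) ∧
      ∀ z, h z + δ * dist z w ≤ h w → h w' ≤ h z + (1/2 : ℝ)^n := by
    intro n w
    set S : Set X := {z | h z + δ * dist z w ≤ h w} with hS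
    have hwS : w ∈ S := by simp [hS]
    have hbdd : BddBelow (h '' S) := ⟨0, by rintro _ ⟨z, _, rfl⟩; exact hnn z⟩
    have hne : (h '' S).Nonempty := ⟨h w, w, hwS, rfl⟩
    obtain ⟨a, ⟨w', hw'S, rfl⟩, ha⟩ := exists_lt_of_csInf_lt hne
      (lt_add_of_pos_right _ (by positivity : (0:ℝ) < (1/2 : ℝ)^n))
    exact ⟨w', hw'S, fun z hz =>
      ha.le.trans (add_le_add_left (csInf_le hbdd ⟨z, hz, rfl⟩) _)⟩
  choose step hstep1 hstep2 using key
  set u : ℕ → X := fun n => Nat.rec x (fun n un => step n un) n with hu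
  have husucc : ∀ n, u (n+1) = step n (u n) := fun n => rfl
  have hA : ∀ n, h (u (n+1)) + δ * dist (u (n+1)) (u n) ≤ h (u n) := by
    intro n; rw [husucc]; exact hstep1 n (u n)
  have hB : ∀ n z, h z + δ * dist z (u n) ≤ h (u n) → h (u (n+1)) ≤ h z + (1/2 : ℝ)^n := by
    intro n; rw [husucc]; exact hstep2 n (u n)
  have hchain : ∀ n m, δ * dist (u (n+m)) (u n) ≤ h (u n) - h (u (n+m)) := by
    intro n m
    induction m with
    | zero => simp
    | succ m ih =>
      have htri := dist_triangle (u (n+m+1)) (u (n+m)) (u n)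
      have h1 := hA (n+m)
      have := mul_le_mul_of_nonneg_left htri hδ.le
      have : δ * dist (u (n+m+1)) (u n) ≤
          δ * dist (u (n+m+1)) (u (n+m)) + δ * dist (u (n+m)) (u n) := by
        rw [← mul_add]; exact this
      show δ * dist (u (n+m+1)) (u n) ≤ h (u n) - h (u (n+m+1))
      linarith
  have hanti : Antitone (fun n => h (u n)) := by
    apply antitone_nat_of_succ_le
    intro n
    have := hA n
    nlinarith [dist_nonneg (x := u (n+1)) (y := u n)]
  have hbdd : BddBelow (Set.range fun n => h (u n)) := ⟨0, by rintro _ ⟨n, rfl⟩; exact hnn _⟩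
  set L : ℝ := ⨅ n, h (u n) with hLdef
  have hL : Tendsto (fun n => h (u n)) atTop (𝓝 L) := tendsto_atTop_ciInf hanti hbdd
  have hLle : ∀ n, L ≤ h (u n) := fun n => ciInf_le hbdd n
  have hdistN : ∀ N n, N ≤ n → dist (u n) (u N) ≤ (h (u N) - L) / δ := by
    intro N n hNn
    obtain ⟨m, rfl⟩ := Nat.exists_eq_add_of_le hNn
    have := hchain N m
    have h2 := hLle (N + m)
    rw [le_div_iff₀ hδ]
    nlinarith
  have hcauchy : CauchySeq u := by
    apply cauchySeq_of_le_tendsto_0 (fun N => 2 * (h (u N) - L) / δ)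
    · intro n m N hn hm
      calc dist (u n) (u m) ≤ dist (u n) (u N) + dist (u N) (u m) := dist_triangle _ _ _
        _ ≤ (h (u N) - L) / δ + (h (u N) - L) / δ := by
            rw [dist_comm (u N) (u m)]
            exact add_le_add (hdistN N n hn) (hdistN N m hm)
        _ = 2 * (h (u N) - L) / δ := by ring
    · have : Tendsto (fun N => 2 * (h (u N) - L) / δ) atTop (𝓝 (2 * (L - L) / δ)) :=
        (((hL.sub_const L).const_mul 2).div_const δ)
      simpa using this
  obtain ⟨y, hy⟩ := cauchySeq_tendsto_of_complete hcauchy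
  have hhy : h y = L := by
    have h1 : Tendsto (fun n => h (u n)) atTop (𝓝 (h y)) :=
      (hcont.continuousAt.tendsto).comp hy
    exact tendsto_nhds_unique h1 hL
  have hdisty : ∀ n, δ * dist y (u n) ≤ h (u n) - h y := by
    intro n
    rw [hhy]
    have h1 : Tendsto (fun m => δ * dist (u m) (u n)) atTop (𝓝 (δ * dist y (u n))) :=
      (((hy.dist tendsto_const_nhds)).const_mul δ)
    have h2 : Tendsto (fun m => h (u n) - h (u m)) atTop (𝓝 (h (u n) - L)) :=
      tendsto_const_nhds.sub hL
    apply le_of_tendsto_of_tendsto h1 h2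
    filter_upwards [eventually_ge_atTop n] with m hm
    obtain ⟨k, rfl⟩ := Nat.exists_eq_add_of_le hm
    exact hchain n k
  refine ⟨y, ?_, ?_⟩
  · have h0 := hdisty 0
    have hu0 : u 0 = x := rfl
    rw [hu0, dist_comm] at h0
    exact h0
  · intro z
    by_contra hcon
    push_neg at hcon
    have hzS : ∀ n, h z + δ * dist z (u n) ≤ h (u n) := by
      intro n
      have htri := dist_triangle z y (u n)
      have h1 := hdisty n
      nlinarith
    have h3 : ∀ n, h (u (n+1)) ≤ h z + (1/2 : ℝ)^n := fun n => hB n z (hzS n)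
    have h4 : L ≤ h z := by
      have h5 : Tendsto (fun n => h (u (n+1))) atTop (𝓝 L) := hL.comp (tendsto_add_atTop_nat 1)
      have h6 : Tendsto (fun n => h z + (1/2 : ℝ)^n) atTop (𝓝 (h z + 0)) :=
        tendsto_const_nhds.add (tendsto_pow_atTop_nhds_zero_of_lt_one (by norm_num) (by norm_num))
      have := le_of_tendsto_of_tendsto h5 h6 (Filter.Eventually.of_forall h3)
      simpa using this
    rw [hhy] at hcon
    nlinarith [dist_nonneg (x := z) (y := y)]

theorem pl_implies_quadratic_growth (d : ℕ) (f : EuclideanSpace ℝ (Fin d) → ℝ)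
    (g : EuclideanSpace ℝ (Fin d) → EuclideanSpace ℝ (Fin d)) (c fstar : ℝ)
    (Xstar : Set (EuclideanSpace ℝ (Fin d)))
    (hc : 0 < c)
    (hf : ContDiff ℝ 1 f)
    (hgrad : ∀ x, HasGradientAt f (g x) x)
    (hXne : Xstar.Nonempty) (hXclosed : IsClosed Xstar)
    (hXmin : ∀ x, x ∈ Xstar ↔ f x = fstar)
    (hlb : ∀ x, fstar ≤ f x)
    (hPL : ∀ x, c * (f x - fstar) ≤ (1 / 2) * ‖g x‖ ^ 2) :
    ∀ x, (c / 4) * (Metric.infDist x Xstar) ^ 2 ≤ f x - fstar := by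
  intro x
  set h : EuclideanSpace ℝ (Fin d) → ℝ := fun z => Real.sqrt (f z - fstar) with hhdef
  set δ : ℝ := Real.sqrt c / 2 with hδdef
  have hδ : 0 < δ := by positivity
  have hcont : Continuous h := by
    rw [hhdef]; exact (hf.continuous.sub continuous_const).sqrt
  have hnn : ∀ z, 0 ≤ h z := fun z => Real.sqrt_nonneg _
  obtain ⟨y, hy1, hy2⟩ := ekeland_aux h hcont hnn δ hδ x
  -- show f y = fstar
  have hyfs : f y = fstar := by
    by_contra hy0
    have hfy : fstar < f y := lt_of_le_of_ne (hlb y) (Ne.symm hy0)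
    have hs : (0:ℝ) < f y - fstar := by linarith
    have hhy : h y = Real.sqrt (f y - fstar) := rfl
    have hhypos : 0 < h y := Real.sqrt_pos.2 hs
    set G : EuclideanSpace ℝ (Fin d) := (1/(2 * h y)) • g y with hGdef
    -- gradient of h at y
    have hsq : HasDerivAt Real.sqrt (1/(2 * Real.sqrt (f y - fstar))) (f y - fstar) :=
      Real.hasDerivAt_sqrt (ne_of_gt hs)
    have hfd : HasFDerivAt (fun z => f z - fstar)
        (InnerProductSpace.toDual ℝ (EuclideanSpace ℝ (Fin d)) (g y)) y :=
      ((hgrad y).hasFDerivAt).sub_const fstar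
    have hcomp : HasFDerivAt h
        ((1/(2 * Real.sqrt (f y - fstar))) •
          InnerProductSpace.toDual ℝ (EuclideanSpace ℝ (Fin d)) (g y)) y :=
      hsq.comp_hasFDerivAt y hfd
    have hG : HasGradientAt h G y := by
      have := hcomp.hasGradientAt
      rwa [map_smul, LinearIsometryEquiv.symm_apply_apply, ← hhy, ← hGdef] at this
    -- lower bound on ‖G‖
    have hnormG : ‖G‖ = ‖g y‖ / (2 * h y) := by
      rw [hGdef, norm_smul, Real.norm_eq_abs, abs_of_pos (by positivity)]
      ring
    have hgybig : Real.sqrt (2 * c * (f y - fstar)) ≤ ‖g y‖ := by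
      have hpl := hPL y
      have h2 : 2 * c * (f y - fstar) ≤ ‖g y‖^2 := by linarith
      calc Real.sqrt (2 * c * (f y - fstar)) ≤ Real.sqrt (‖g y‖^2) := Real.sqrt_le_sqrt h2
        _ = ‖g y‖ := by rw [Real.sqrt_sq (norm_nonneg _)]
    have hGlow : δ < ‖G‖ := by
      rw [hnormG]
      have heq : Real.sqrt (2 * c * (f y - fstar)) =
          Real.sqrt 2 * Real.sqrt c * h y := by
        rw [hhy, ← Real.sqrt_mul (by norm_num : (0:ℝ) ≤ 2),
          Real.sqrt_mul (by positivity) (f y - fstar)]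
      have h2lt : Real.sqrt c / 2 < Real.sqrt 2 * Real.sqrt c / 2 := by
        have hsc : 0 < Real.sqrt c := Real.sqrt_pos.2 hc
        have h12 : (1:ℝ) < Real.sqrt 2 := by
          nlinarith [Real.sq_sqrt (by norm_num : (0:ℝ) ≤ 2), Real.sqrt_nonneg 2]
        nlinarith
      calc δ = Real.sqrt c / 2 := rfl
        _ < Real.sqrt 2 * Real.sqrt c / 2 := h2lt
        _ = (Real.sqrt 2 * Real.sqrt c * h y) / (2 * h y) := by
            field_simp
        _ ≤ ‖g y‖ / (2 * h y) := by
            apply div_le_div_of_nonneg_right _ (by positivity)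
            rw [← heq]; exact hgybig
    -- upper bound on ‖G‖ from minimality
    have hGup : ‖G‖ ≤ δ := by
      set v : EuclideanSpace ℝ (Fin d) := -G with hvdef
      have hcurve : HasDerivAt (fun t : ℝ => y + t • v) v 0 := by
        have h1 : HasDerivAt (fun t : ℝ => t • v) ((1:ℝ) • v) 0 :=
          (hasDerivAt_id (0:ℝ)).smul_const v
        simpa using h1.const_add y
      have hG0 : HasFDerivAt h
          (InnerProductSpace.toDual ℝ (EuclideanSpace ℝ (Fin d)) G)
          ((fun t : ℝ => y + t • v) 0) := by
        simpa using hG.hasFDerivAt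
      have hφ : HasDerivAt (fun t : ℝ => h (y + t • v)) (-‖G‖^2) 0 := by
        have hcc := hG0.comp_hasDerivAt 0 hcurve
        have hval : (InnerProductSpace.toDual ℝ (EuclideanSpace ℝ (Fin d)) G) v = -‖G‖^2 := by
          rw [InnerProductSpace.toDual_apply_apply, hvdef, inner_neg_right,
            real_inner_self_eq_norm_sq]
        rw [hval] at hcc
        exact hcc
      have hslope : Filter.Tendsto (slope (fun t : ℝ => h (y + t • v)) 0)
          (nhdsWithin 0 (Set.Ioi 0)) (nhds (-‖G‖^2)) :=
        (hasDerivAt_iff_tendsto_slope.1 hφ).mono_left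
          (nhdsWithin_mono 0 (fun t ht => ne_of_gt ht))
      have hineq : -(δ * ‖G‖) ≤ -‖G‖^2 := by
        apply ge_of_tendsto hslope
        filter_upwards [self_mem_nhdsWithin] with t ht
        have ht' : (0:ℝ) < t := ht
        have hz := hy2 (y + t • v)
        have hdist : dist (y + t • v) y = t * ‖G‖ := by
          rw [dist_eq_norm]
          simp [norm_smul, abs_of_pos ht', hvdef]
        rw [hdist] at hz
        have hfin : -(δ * ‖G‖) ≤ (h (y + t • v) - h y) / t := by
          rw [le_div_iff₀ ht']
          nlinarith
        simpa [slope_def_field, div_eq_inv_mul] using hfin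
      nlinarith
    linarith
  -- conclude
  have hyX : y ∈ Xstar := (hXmin y).2 hyfs
  have hhy0 : h y = 0 := by simp [hhdef, hyfs]
  have hdxy : Metric.infDist x Xstar ≤ dist x y := Metric.infDist_le_dist_of_mem hyX
  have hxy : δ * dist x y ≤ h x := by rw [hhy0] at hy1; linarith
  have hD0 : 0 ≤ Metric.infDist x Xstar := Metric.infDist_nonneg
  have hhx2 : h x ^ 2 = f x - fstar := Real.sq_sqrt (by linarith [hlb x])
  have hδ2 : δ^2 = c / 4 := by
    rw [hδdef, div_pow, Real.sq_sqrt hc.le]; norm_num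
  have key : δ * Metric.infDist x Xstar ≤ h x :=
    le_trans (mul_le_mul_of_nonneg_left hdxy hδ.le) hxy
  have keysq : (δ * Metric.infDist x Xstar)^2 ≤ h x ^ 2 := by
    apply sq_le_sq' _ key
    nlinarith
  calc (c / 4) * (Metric.infDist x Xstar) ^ 2 = (δ * Metric.infDist x Xstar)^2 := by
        rw [mul_pow, hδ2]
    _ ≤ h x ^ 2 := keysq
    _ = f x - fstar := hhx2
end

section
/- If f is L-smooth and satisfies the error bound condition c_EB·dist(x, X⋆) ≤ ‖∇f(x)‖ for all x, then f satisfies the Polyak–Łojasiewicz inequality with constant c_PL = c_EB²/L, i.e., (c_EB²/L)·(f(x) − f⋆) ≤ (1/2)‖∇f(x)‖² for all x. -/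
open Metric intervalIntegral

theorem eb_implies_pl (d : ℕ) (f : EuclideanSpace ℝ (Fin d) → ℝ)
    (g : EuclideanSpace ℝ (Fin d) → EuclideanSpace ℝ (Fin d)) (L cEB fstar : ℝ)
    (Xstar : Set (EuclideanSpace ℝ (Fin d)))
    (hcEB : 0 < cEB)
    (hgrad : ∀ x, HasGradientAt f (g x) x)
    (hlip : ∀ x y, ‖g x - g y‖ ≤ L * ‖x - y‖)
    (hXne : Xstar.Nonempty) (hXclosed : IsClosed Xstar)
    (hXmin : ∀ x, x ∈ Xstar ↔ (f x = fstar ∧ ∀ y, f x ≤ f y))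
    (hEB : ∀ x, cEB * Metric.infDist x Xstar ≤ ‖g x‖) :
    ∀ x, (cEB ^ 2 / L) * (f x - fstar) ≤ (1 / 2) * ‖g x‖ ^ 2 := by
  -- gradient vanishes on Xstar
  have hgzero : ∀ z ∈ Xstar, g z = 0 := by
    intro z hz
    have hmin : IsLocalMin f z := by
      have h := (hXmin z).1 hz
      exact Filter.Eventually.of_forall (fun y => h.2 y)
    have h0 : (InnerProductSpace.toDual ℝ _) (g z) = 0 :=
      hmin.hasFDerivAt_eq_zero (hgrad z).hasFDerivAt
    simpa using congrArg (InnerProductSpace.toDual ℝ _).symm h0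
  intro x
  obtain ⟨xb, hxb, hdist⟩ := hXclosed.exists_infDist_eq_dist hXne x
  have hgxb : g xb = 0 := hgzero xb hxb
  have hfxb : f xb = fstar := ((hXmin xb).1 hxb).1
  by_cases hL : 0 < L
  · -- descent lemma at xb: f x - f xb ≤ L/2 * ‖x - xb‖²
    set v : EuclideanSpace ℝ (Fin d) := x - xb with hv
    have hγ : ∀ t : ℝ, HasDerivAt (fun t : ℝ => f (xb + t • v))
        (inner ℝ (g (xb + t • v)) v : ℝ) t := by
      intro t
      have hpath : HasDerivAt (fun t : ℝ => xb + t • v) v t := by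
        simpa using ((hasDerivAt_id t).smul_const v).const_add xb
      have := ((hgrad (xb + t • v)).hasFDerivAt.comp_hasDerivAt t hpath)
      simp only [InnerProductSpace.toDual_apply_apply] at this; exact this
    have hgcont : Continuous g := by
      have : LipschitzWith L.toNNReal g := by
        apply LipschitzWith.of_dist_le_mul
        intro a b
        rw [dist_eq_norm, dist_eq_norm, Real.coe_toNNReal _ hL.le]
        exact hlip a b
      exact this.continuous
    have hcont : Continuous (fun t : ℝ => (inner ℝ (g (xb + t • v)) v : ℝ)) := by
      exact ((hgcont.comp (by continuity)).inner continuous_const)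
    have hint : f x - f xb = ∫ t in (0:ℝ)..1, (inner ℝ (g (xb + t • v)) v : ℝ) := by
      have := integral_eq_sub_of_hasDerivAt (f := fun t : ℝ => f (xb + t • v))
        (f' := fun t : ℝ => (inner ℝ (g (xb + t • v)) v : ℝ)) (a := 0) (b := 1)
        (fun t _ => hγ t) (hcont.intervalIntegrable 0 1)
      simpa [hv] using this.symm
    have hbound : f x - f xb ≤ L / 2 * ‖v‖ ^ 2 := by
      rw [hint]
      have hmono : ∫ t in (0:ℝ)..1, (inner ℝ (g (xb + t • v)) v : ℝ)
          ≤ ∫ t in (0:ℝ)..1, L * t * ‖v‖ ^ 2 := by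
        apply integral_mono_on (by norm_num) (hcont.intervalIntegrable 0 1)
          ((continuous_const.mul continuous_id).mul continuous_const
            |>.intervalIntegrable 0 1)
        intro t ht
        calc (inner ℝ (g (xb + t • v)) v : ℝ) ≤ ‖g (xb + t • v)‖ * ‖v‖ :=
              real_inner_le_norm _ _
          _ ≤ (L * (t * ‖v‖)) * ‖v‖ := by
              apply mul_le_mul_of_nonneg_right _ (norm_nonneg v)
              have := hlip (xb + t • v) xb
              simpa [norm_smul, abs_of_nonneg ht.1, hgxb] using this
          _ = L * t * ‖v‖ ^ 2 := by ring
      calc _ ≤ ∫ t in (0:ℝ)..1, L * t * ‖v‖ ^ 2 := hmono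
        _ = L / 2 * ‖v‖ ^ 2 := by
            simp [mul_assoc, integral_const_mul, mul_comm, integral_id]
            ring
    have hnv : ‖v‖ = infDist x Xstar := by rw [hdist, dist_eq_norm]
    have hEBx := hEB x
    have hd0 : 0 ≤ infDist x Xstar := infDist_nonneg
    have hsq : cEB ^ 2 * infDist x Xstar ^ 2 ≤ ‖g x‖ ^ 2 := by
      have := mul_self_le_mul_self (by positivity) hEBx
      calc cEB ^ 2 * infDist x Xstar ^ 2
          = (cEB * infDist x Xstar) * (cEB * infDist x Xstar) := by ring
        _ ≤ ‖g x‖ * ‖g x‖ := this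
        _ = ‖g x‖ ^ 2 := (sq ‖g x‖).symm
    calc (cEB ^ 2 / L) * (f x - fstar) ≤ (cEB ^ 2 / L) * (L / 2 * ‖v‖ ^ 2) := by
          apply mul_le_mul_of_nonneg_left _ (by positivity)
          rwa [← hfxb]
      _ = (1 / 2) * (cEB ^ 2 * infDist x Xstar ^ 2) := by
          rw [hnv]; field_simp
      _ ≤ (1 / 2) * ‖g x‖ ^ 2 := by linarith [hsq]
  · -- L ≤ 0: g is identically 0, everything is a minimizer
    push_neg at hL
    have hgall : ∀ y, g y = 0 := by
      intro y
      have h := hlip y xb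
      have : ‖g y - g xb‖ ≤ 0 :=
        h.trans (mul_nonpos_of_nonpos_of_nonneg hL (norm_nonneg _))
      have := le_antisymm this (norm_nonneg _)
      rw [norm_eq_zero, sub_eq_zero] at this
      rw [this, hgxb]
    have hd0 : infDist x Xstar = 0 := by
      have := hEB x
      rw [hgall x] at this
      simp at this
      nlinarith [infDist_nonneg (s := Xstar) (x := x), this]
    have hxX : x ∈ Xstar := by
      rw [← hXclosed.closure_eq]
      exact mem_closure_iff_infDist_zero hXne |>.2 hd0
    have : f x = fstar := ((hXmin x).1 hxX).1
    rw [this, sub_self, mul_zero]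
    positivity
end

section
/- Suppose f is L-smooth, μ_WC-weakly convex (i.e., f(y) ≥ f(x) + ⟨∇f(x), y−x⟩ − (μ_WC/2)‖y−x‖² for all x,y), and satisfies the quadratic growth condition (c/2)·dist²(x,X⋆) ≤ f(x) − f⋆ with c > μ_WC. Then for every α ∈ (0, (c − μ_WC)/L), setting μ = (c − μ_WC − αL)/2 > 0, it holds for all x that α(f(x) − f⋆) + ⟨∇f(x), P(x) − x⟩ + (μ/2)‖P(x) − x‖² ≤ 0, where P(x) is a nearest point of X⋆ to x. -/
open scoped RealInnerProductSpace

theorem weakly_convex_qg_implies_noncvx_condition (d : ℕ)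
    (f : EuclideanSpace ℝ (Fin d) → ℝ)
    (g : EuclideanSpace ℝ (Fin d) → EuclideanSpace ℝ (Fin d))
    (L μWC c fstar : ℝ)
    (Xstar : Set (EuclideanSpace ℝ (Fin d)))
    (P : EuclideanSpace ℝ (Fin d) → EuclideanSpace ℝ (Fin d))
    (hL : 0 < L)
    (hgrad : ∀ x, HasGradientAt f (g x) x)
    (hsmooth : ∀ x y, f y ≤ f x + ⟪g x, y - x⟫ + L / 2 * ‖y - x‖ ^ 2)
    (hWC : ∀ x y, f y ≥ f x + ⟪g x, y - x⟫ - μWC / 2 * ‖y - x‖ ^ 2)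
    (hXne : Xstar.Nonempty) (hXclosed : IsClosed Xstar)
    (hXmin : ∀ x, x ∈ Xstar ↔ (f x = fstar ∧ ∀ y, f x ≤ f y))
    (hgradzero : ∀ x ∈ Xstar, g x = 0)
    (hPmem : ∀ x, P x ∈ Xstar)
    (hPnear : ∀ x, ∀ y ∈ Xstar, ‖x - P x‖ ≤ ‖x - y‖)
    (hQG : ∀ x, (c / 2) * ‖x - P x‖ ^ 2 ≤ f x - fstar)
    (hcμ : μWC < c)
    (α : ℝ) (hα : α ∈ Set.Ioo (0 : ℝ) ((c - μWC) / L)) :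
    0 < (c - μWC - α * L) / 2 ∧
      ∀ x, α * (f x - fstar) + ⟪g x, P x - x⟫ +
        ((c - μWC - α * L) / 2) / 2 * ‖P x - x‖ ^ 2 ≤ 0 := by
  have hαL : α * L < c - μWC := by
    have h2 := hα.2
    rw [lt_div_iff₀ hL] at h2
    linarith
  refine ⟨by linarith, fun x => ?_⟩
  have hps : f (P x) = fstar := ((hXmin (P x)).1 (hPmem x)).1
  have h1 : ⟪g x, P x - x⟫ ≤ fstar - f x + μWC / 2 * ‖P x - x‖ ^ 2 := by
    have := hWC x (P x); linarith
  have h2 : f x - fstar ≤ L / 2 * ‖x - P x‖ ^ 2 := by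
    have h := hsmooth (P x) x
    rw [hgradzero (P x) (hPmem x), inner_zero_left] at h
    linarith
  have hn : ‖x - P x‖ = ‖P x - x‖ := norm_sub_rev _ _
  rw [hn] at h2
  have hq := hQG x
  rw [hn] at hq
  have hs : (0:ℝ) ≤ ‖P x - x‖ ^ 2 := sq_nonneg _
  nlinarith [mul_le_mul_of_nonneg_left h2 hα.1.le, mul_nonneg (sub_pos.2 hαL).le hs]
end

section
/- In a complete binary tree with n = 2^k leaves where each internal node stores the sum of its children, every prefix sum of the first j leaves (1 ≤ j ≤ n) can be written as the sum of at most log₂(n) node values, and each leaf value contributes to at most log₂(n) + 1 node values. -/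
/-- The node at level `b` chosen for prefix `m` contains leaf `j`. -/
def BTM.P (m j b : ℕ) : Prop :=
  Nat.testBit m b = true ∧ j / 2 ^ b = 2 * (m / 2 ^ (b + 1))

lemma BTM.testBit_div {m b : ℕ} (h : Nat.testBit m b = true) :
    m / 2 ^ b = 2 * (m / 2 ^ (b + 1)) + 1 := by
  have h1 : m / 2 ^ b % 2 = 1 := by
    have := Nat.testBit_eq_decide_div_mod_eq (x := m) (i := b)
    rw [h] at this
    exact (of_decide_eq_true this.symm)
  have h2 : m / 2 ^ (b + 1) = m / 2 ^ b / 2 := by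
    rw [pow_succ, Nat.div_div_eq_div_mul]
  omega

lemma BTM.P_lt {m j b : ℕ} (h : BTM.P m j b) : j < m := by
  obtain ⟨ht, he⟩ := h
  have h1 := BTM.testBit_div ht
  have h2 : j / 2 ^ b < m / 2 ^ b := by omega
  by_contra hc
  exact absurd (Nat.div_le_div_right (c := 2 ^ b) (le_of_not_gt hc)) (not_le.mpr h2)

lemma BTM.P_succ_eq {m j b : ℕ} (h : BTM.P m j b) :
    j / 2 ^ (b + 1) = m / 2 ^ (b + 1) := by
  obtain ⟨ht, he⟩ := h
  have h1 : j / 2 ^ (b + 1) = j / 2 ^ b / 2 := by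
    rw [pow_succ, Nat.div_div_eq_div_mul]
  omega

lemma BTM.P_high {m j b c : ℕ} (h : BTM.P m j b) (hc : b < c) :
    j / 2 ^ c = m / 2 ^ c := by
  have h1 := BTM.P_succ_eq h
  have h2 : 2 ^ c = 2 ^ (b + 1) * 2 ^ (c - (b + 1)) := by
    rw [← pow_add]; congr 1; omega
  rw [h2, ← Nat.div_div_eq_div_mul, ← Nat.div_div_eq_div_mul, h1]

lemma BTM.P_unique {m j b b' : ℕ} (h : BTM.P m j b) (h' : BTM.P m j b') : b = b' := by
  rcases Nat.lt_trichotomy b b' with hlt | heq | hgt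
  · have := BTM.P_high h hlt
    have h1 := BTM.testBit_div h'.1
    have h2 := h'.2
    omega
  · exact heq
  · have := BTM.P_high h' hgt
    have h1 := BTM.testBit_div h.1
    have h2 := h.2
    omega

lemma BTM.P_exists {m j : ℕ} (hj : j < m) : ∃ b, BTM.P m j b := by
  have hQ : ∃ c, j / 2 ^ c = m / 2 ^ c := by
    refine ⟨m, ?_⟩
    rw [Nat.div_eq_of_lt (lt_trans hj (Nat.lt_two_pow_self (n := m))),
      Nat.div_eq_of_lt (Nat.lt_two_pow_self (n := m))]
  classical
  let c := Nat.find hQ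
  have hc : j / 2 ^ c = m / 2 ^ c := Nat.find_spec hQ
  have hc1 : 1 ≤ c := by
    rcases Nat.eq_zero_or_pos c with h0 | h1
    · exfalso
      have := Nat.find_spec hQ
      rw [show Nat.find hQ = c from rfl, h0] at this
      simp at this; omega
    · exact h1
  set b := c - 1 with hb
  have hcb : c = b + 1 := by omega
  have hne : j / 2 ^ b ≠ m / 2 ^ b := by
    intro hcon
    exact absurd hcon (Nat.find_min hQ (by omega))
  have hle : j / 2 ^ b ≤ m / 2 ^ b := Nat.div_le_div_right (le_of_lt hj)
  have hhalf : j / 2 ^ b / 2 = m / 2 ^ b / 2 := by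
    have e1 : j / 2 ^ c = j / 2 ^ b / 2 := by
      rw [hcb, pow_succ, Nat.div_div_eq_div_mul]
    have e2 : m / 2 ^ c = m / 2 ^ b / 2 := by
      rw [hcb, pow_succ, Nat.div_div_eq_div_mul]
    omega
  have hmod : m / 2 ^ b % 2 = 1 ∧ j / 2 ^ b % 2 = 0 := by omega
  refine ⟨b, ?_, ?_⟩
  · rw [Nat.testBit_eq_decide_div_mod_eq]; exact decide_eq_true hmod.1
  · have e2 : m / 2 ^ (b + 1) = m / 2 ^ b / 2 := by
      rw [pow_succ, Nat.div_div_eq_div_mul]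
    omega

lemma BTM.P_le {m j b k : ℕ} (hm : m ≤ 2 ^ k) (h : BTM.P m j b) : b ≤ k := by
  by_contra hc
  have h2 : m < 2 ^ b := lt_of_le_of_lt hm (Nat.pow_lt_pow_right one_lt_two (by omega))
  have := Nat.testBit_lt_two_pow h2
  rw [h.1] at this
  simp at this

theorem binary_tree_mechanism (k : ℕ) (hk : 1 ≤ k) (n : ℕ) (hn : n = 2 ^ k)
    (A : Matrix (Fin n) (Fin n) ℝ)
    (hA : ∀ i j : Fin n, A i j = if (j : ℕ) ≤ (i : ℕ) then 1 else 0) :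
    ∃ (W : ℕ) (B : Matrix (Fin n) (Fin W) ℝ) (C : Matrix (Fin W) (Fin n) ℝ),
      (∀ i j, B i j = 0 ∨ B i j = 1) ∧
      (∀ i j, C i j = 0 ∨ C i j = 1) ∧
      B * C = A ∧
      (∀ i : Fin n, ∑ j, B i j ≤ (k : ℝ)) ∧
      (∀ j : Fin n, ∑ i, C i j ≤ (k : ℝ) + 1) := by
  classical
  set e : Fin ((k + 1) * n) ≃ Fin (k + 1) × Fin n := finProdFinEquiv.symm with he
  -- B: row i selects the dyadic nodes decomposing the prefix [0, i]
  refine ⟨(k + 1) * n,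
    (fun i w => if Nat.testBit ((i : ℕ) + 1) ((e w).1 : ℕ) ∧
        ((e w).2 : ℕ) = 2 * (((i : ℕ) + 1) / 2 ^ (((e w).1 : ℕ) + 1)) then 1 else 0),
    (fun w j => if (j : ℕ) / 2 ^ ((e w).1 : ℕ) = ((e w).2 : ℕ) then 1 else 0),
    ?_, ?_, ?_, ?_, ?_⟩
  · intro i j; dsimp only; split_ifs <;> simp
  · intro i j; dsimp only; split_ifs <;> simp
  · ext i j
    erw [Matrix.mul_apply, hA]
    have key : ∀ w : Fin ((k + 1) * n),
        ((if Nat.testBit ((i : ℕ) + 1) ((e w).1 : ℕ) ∧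
            ((e w).2 : ℕ) = 2 * (((i : ℕ) + 1) / 2 ^ (((e w).1 : ℕ) + 1)) then (1:ℝ) else 0) *
          (if (j : ℕ) / 2 ^ ((e w).1 : ℕ) = ((e w).2 : ℕ) then (1:ℝ) else 0)) =
        (fun p : Fin (k + 1) × Fin n =>
          if (Nat.testBit ((i : ℕ) + 1) (p.1 : ℕ) ∧
              (p.2 : ℕ) = 2 * (((i : ℕ) + 1) / 2 ^ ((p.1 : ℕ) + 1))) ∧
            (j : ℕ) / 2 ^ (p.1 : ℕ) = (p.2 : ℕ) then (1:ℝ) else 0) (e w) := by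
      intro w; dsimp only; split_ifs with h1 h2 h3 <;> simp_all
    rw [Finset.sum_congr rfl (fun w _ => key w),
      Equiv.sum_comp e (fun p : Fin (k + 1) × Fin n =>
        if (Nat.testBit ((i : ℕ) + 1) (p.1 : ℕ) ∧
            (p.2 : ℕ) = 2 * (((i : ℕ) + 1) / 2 ^ ((p.1 : ℕ) + 1))) ∧
          (j : ℕ) / 2 ^ (p.1 : ℕ) = (p.2 : ℕ) then (1:ℝ) else 0),
      Finset.sum_boole]
    by_cases hij : (j : ℕ) ≤ (i : ℕ)
    · rw [if_pos hij]
      have hjm : (j : ℕ) < (i : ℕ) + 1 := by omega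
      obtain ⟨b, hb⟩ := BTM.P_exists hjm
      have hbk : b ≤ k := BTM.P_le (by omega) hb
      have hqn : (j : ℕ) / 2 ^ b < n := lt_of_le_of_lt (Nat.div_le_self _ _) j.2
      have : (Finset.univ.filter fun p : Fin (k + 1) × Fin n =>
          (Nat.testBit ((i : ℕ) + 1) (p.1 : ℕ) ∧
              (p.2 : ℕ) = 2 * (((i : ℕ) + 1) / 2 ^ ((p.1 : ℕ) + 1))) ∧
            (j : ℕ) / 2 ^ (p.1 : ℕ) = (p.2 : ℕ)) =
          {(⟨b, by omega⟩, ⟨(j : ℕ) / 2 ^ b, hqn⟩)} := by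
        ext p
        simp only [Finset.mem_filter, Finset.mem_univ, true_and, Finset.mem_singleton]
        constructor
        · rintro ⟨⟨h1, h2⟩, h3⟩
          have hP : BTM.P ((i : ℕ) + 1) (j : ℕ) (p.1 : ℕ) := ⟨h1, by omega⟩
          have hbe : (p.1 : ℕ) = b := BTM.P_unique hP hb
          have : (p.2 : ℕ) = (j : ℕ) / 2 ^ b := by rw [← hbe]; omega
          obtain ⟨p1, p2⟩ := p
          simp only [Prod.mk.injEq, Fin.ext_iff]
          exact ⟨hbe, this⟩
        · rintro rfl
          exact ⟨⟨hb.1, by simpa using hb.2⟩, by simp⟩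
      rw [this]; simp
    · rw [if_neg hij]
      have : (Finset.univ.filter fun p : Fin (k + 1) × Fin n =>
          (Nat.testBit ((i : ℕ) + 1) (p.1 : ℕ) ∧
              (p.2 : ℕ) = 2 * (((i : ℕ) + 1) / 2 ^ ((p.1 : ℕ) + 1))) ∧
            (j : ℕ) / 2 ^ (p.1 : ℕ) = (p.2 : ℕ)) = ∅ := by
        ext p
        simp only [Finset.mem_filter, Finset.mem_univ, true_and, Finset.notMem_empty,
          iff_false]
        rintro ⟨⟨h1, h2⟩, h3⟩
        have hP : BTM.P ((i : ℕ) + 1) (j : ℕ) (p.1 : ℕ) := ⟨h1, by omega⟩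
        have := BTM.P_lt hP
        omega
      rw [this]; simp
  · -- row sums of B
    intro i
    dsimp only
    rw [Equiv.sum_comp e (fun p : Fin (k + 1) × Fin n =>
      if Nat.testBit ((i : ℕ) + 1) (p.1 : ℕ) ∧
        (p.2 : ℕ) = 2 * (((i : ℕ) + 1) / 2 ^ ((p.1 : ℕ) + 1)) then (1:ℝ) else 0),
      Finset.sum_boole]
    set m := (i : ℕ) + 1 with hm
    have hcard : (Finset.univ.filter fun p : Fin (k + 1) × Fin n =>
        Nat.testBit m (p.1 : ℕ) ∧
          (p.2 : ℕ) = 2 * (m / 2 ^ ((p.1 : ℕ) + 1))).card ≤ k := by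
      have hinj : (Finset.univ.filter fun p : Fin (k + 1) × Fin n =>
          Nat.testBit m (p.1 : ℕ) ∧
            (p.2 : ℕ) = 2 * (m / 2 ^ ((p.1 : ℕ) + 1))).card ≤
          (Finset.univ.filter fun b : Fin (k + 1) =>
            Nat.testBit m (b : ℕ) = true).card := by
        apply Finset.card_le_card_of_injOn (fun p => p.1)
        · intro p hp
          simp only [Finset.mem_coe, Finset.mem_filter, Finset.mem_univ, true_and] at hp ⊢
          exact hp.1
        · intro p hp q hq hpq
          obtain ⟨p1, p2⟩ := p; obtain ⟨q1, q2⟩ := q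
          simp only [Finset.mem_coe, Finset.mem_filter, Finset.mem_univ, true_and] at hp hq
          simp only at hpq
          subst hpq
          simp only [Prod.mk.injEq, true_and]
          exact Fin.ext (by omega)
      refine le_trans hinj ?_
      by_cases hmn : m = 2 ^ k
      · have : (Finset.univ.filter fun b : Fin (k + 1) =>
            Nat.testBit m (b : ℕ) = true) ⊆ {(⟨k, by omega⟩ : Fin (k + 1))} := by
          intro b hb
          simp only [Finset.mem_filter, Finset.mem_univ, true_and] at hb
          rw [hmn, Nat.testBit_two_pow] at hb
          simp only [Finset.mem_singleton, Fin.ext_iff]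
          simp only [decide_eq_true_eq] at hb
          exact hb.symm
        calc _ ≤ ({(⟨k, by omega⟩ : Fin (k + 1))} : Finset (Fin (k + 1))).card :=
              Finset.card_le_card this
          _ ≤ k := by simp; omega
      · have hmlt : m < 2 ^ k := by
          have : m ≤ 2 ^ k := by rw [hm]; have := i.2; omega
          omega
        have : (Finset.univ.filter fun b : Fin (k + 1) =>
            Nat.testBit m (b : ℕ) = true) ⊆
            Finset.univ.erase (⟨k, by omega⟩ : Fin (k + 1)) := by
          intro b hb
          simp only [Finset.mem_filter, Finset.mem_univ, true_and] at hb
          rw [Finset.mem_erase]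
          refine ⟨?_, Finset.mem_univ _⟩
          intro hbe
          rw [hbe] at hb
          have := Nat.testBit_lt_two_pow hmlt
          simp only [Fin.val_mk] at hb
          rw [hb] at this; simp at this
        calc _ ≤ (Finset.univ.erase (⟨k, by omega⟩ : Fin (k + 1))).card :=
              Finset.card_le_card this
          _ = k := by rw [Finset.card_erase_of_mem (Finset.mem_univ _)]; simp
    exact_mod_cast hcard
  · -- column sums of C
    intro j
    dsimp only
    rw [Equiv.sum_comp e (fun p : Fin (k + 1) × Fin n =>
      if (j : ℕ) / 2 ^ (p.1 : ℕ) = (p.2 : ℕ) then (1:ℝ) else 0),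
      Finset.sum_boole]
    have hcard : (Finset.univ.filter fun p : Fin (k + 1) × Fin n =>
        (j : ℕ) / 2 ^ (p.1 : ℕ) = (p.2 : ℕ)).card ≤ k + 1 := by
      have hinj : (Finset.univ.filter fun p : Fin (k + 1) × Fin n =>
          (j : ℕ) / 2 ^ (p.1 : ℕ) = (p.2 : ℕ)).card ≤
          (Finset.univ : Finset (Fin (k + 1))).card := by
        apply Finset.card_le_card_of_injOn (fun p => p.1)
        · intro p _; exact Finset.mem_univ _
        · intro p hp q hq hpq
          obtain ⟨p1, p2⟩ := p; obtain ⟨q1, q2⟩ := q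
          simp only [Finset.mem_coe, Finset.mem_filter, Finset.mem_univ, true_and] at hp hq
          simp only at hpq
          subst hpq
          simp only [Prod.mk.injEq, true_and]
          exact Fin.ext (by omega)
      simpa using hinj
    calc ((Finset.univ.filter fun p : Fin (k + 1) × Fin n =>
        (j : ℕ) / 2 ^ (p.1 : ℕ) = (p.2 : ℕ)).card : ℝ) ≤ ((k + 1 : ℕ) : ℝ) := by
          exact_mod_cast hcard
      _ = (k : ℝ) + 1 := by push_cast; ring
end
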